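/- Let P be a weakly connected convex finite collection of cells. Then the ideal I_P of inner 2-minors of P equals the toric ideal J_P, the kernel of the map φ: K[x_{ij} : (i,j) ∈ V(P)] → K[s,t] with φ(x_{ij}) = s_i t_j. -/

import Mathlib

open scoped BigOperators

abbrev Cell : Type := ℕ × ℕ

/-- The four corners of the unit cell with lower left corner `a`. -/
def cellVerts (a : Cell) : Finset (ℕ × ℕ) :=
  {a, (a.1 + 1, a.2), (a.1, a.2 + 1), (a.1 + 1, a.2 + 1)}

/-- The vertex set of a collection of cells. -/
def verts (P : Finset Cell) : Finset (ℕ × ℕ) := P.biUnion cellVerts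

/-- Row convexity of a collection of cells. -/
def RowConvex (P : Finset Cell) : Prop :=
  ∀ a ∈ P, ∀ b ∈ P, a.2 = b.2 → ∀ r : ℕ, a.1 ≤ r → r ≤ b.1 → (r, a.2) ∈ P

/-- Column convexity of a collection of cells. -/
def ColConvex (P : Finset Cell) : Prop :=
  ∀ a ∈ P, ∀ b ∈ P, a.1 = b.1 → ∀ s : ℕ, a.2 ≤ s → s ≤ b.2 → (a.1, s) ∈ P

/-- A collection of cells is convex if it is row and column convex. -/
def IsConvexColl (P : Finset Cell) : Prop := RowConvex P ∧ ColConvex P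

/-- Weak connectedness: any two cells are joined by a sequence of cells of `P`
in which consecutive cells share at least one vertex. -/
def WeaklyConnected (P : Finset Cell) : Prop :=
  ∀ a ∈ P, ∀ b ∈ P,
    Relation.ReflTransGen
      (fun c d => c ∈ P ∧ d ∈ P ∧ (cellVerts c ∩ cellVerts d).Nonempty) a b

/-- Two cells share an edge. -/
def edgeAdj (a b : Cell) : Prop :=
  (a.1 = b.1 ∧ (a.2 + 1 = b.2 ∨ b.2 + 1 = a.2)) ∨
  (a.2 = b.2 ∧ (a.1 + 1 = b.1 ∨ b.1 + 1 = a.1))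

/-- Connectedness: any two cells are joined by an edge-sharing path of cells of `P`. -/
def ConnectedColl (P : Finset Cell) : Prop :=
  ∀ a ∈ P, ∀ b ∈ P,
    Relation.ReflTransGen (fun c d => c ∈ P ∧ d ∈ P ∧ edgeAdj c d) a b

/-- `Q` is a connected component of `P`. -/
def IsComponent (P Q : Finset Cell) : Prop :=
  Q ⊆ P ∧ Q.Nonempty ∧ ConnectedColl Q ∧
    ∀ R : Finset Cell, Q ⊆ R → R ⊆ P → ConnectedColl R → R = Q

/-- The cell `c` belongs to the interval `[a,b]`. -/
def cellInBox (a b : ℕ × ℕ) (c : Cell) : Prop :=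
  a.1 ≤ c.1 ∧ c.1 + 1 ≤ b.1 ∧ a.2 ≤ c.2 ∧ c.2 + 1 ≤ b.2

/-- `c` is a border cell of the interval `[a,b]`. -/
def borderCell (a b : ℕ × ℕ) (c : Cell) : Prop :=
  cellInBox a b c ∧ (c.1 = a.1 ∨ c.1 + 1 = b.1 ∨ c.2 = a.2 ∨ c.2 + 1 = b.2)

/-- A collection of cells is simple (has no holes). -/
def SimpleColl (P : Finset Cell) : Prop :=
  ∀ a b : ℕ × ℕ, a.1 < b.1 → a.2 < b.2 →
    (∀ v ∈ verts P, a.1 < v.1 ∧ v.1 < b.1 ∧ a.2 < v.2 ∧ v.2 < b.2) →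
    ∀ c : Cell, cellInBox a b c → c ∉ P →
      ∃ d : Cell, borderCell a b d ∧
        Relation.ReflTransGen
          (fun u v => cellInBox a b u ∧ cellInBox a b v ∧ u ∉ P ∧ v ∉ P ∧ edgeAdj u v) c d

/-- `[a,b]` is an inner interval of `P`: it is proper and all of its cells belong to `P`. -/
def InnerInterval (P : Finset Cell) (a b : ℕ × ℕ) : Prop :=
  a.1 < b.1 ∧ a.2 < b.2 ∧
    ∀ r s : ℕ, a.1 ≤ r → r < b.1 → a.2 ≤ s → s < b.2 → (r, s) ∈ P

/-- The set of inner 2-minors of `P`. -/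
def innerMinors (K : Type*) [Field K] (P : Finset Cell) :
    Set (MvPolynomial {v : ℕ × ℕ // v ∈ verts P} K) :=
  { f | ∃ a b c d : {v : ℕ × ℕ // v ∈ verts P},
      InnerInterval P a.1 b.1 ∧ c.1 = (b.1.1, a.1.2) ∧ d.1 = (a.1.1, b.1.2) ∧
      f = MvPolynomial.X a * MvPolynomial.X b - MvPolynomial.X c * MvPolynomial.X d }

/-- The ideal of inner 2-minors of `P`. -/
noncomputable def innerIdeal (K : Type*) [Field K] (P : Finset Cell) :
    Ideal (MvPolynomial {v : ℕ × ℕ // v ∈ verts P} K) :=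
  Ideal.span (innerMinors K P)

/-- The toric map `φ` sending `x_{(i,j)}` to `s_i t_j`. -/
noncomputable def phiP (K : Type*) [Field K] (P : Finset Cell) :
    MvPolynomial {v : ℕ × ℕ // v ∈ verts P} K →ₐ[K] MvPolynomial (ℕ ⊕ ℕ) K :=
  MvPolynomial.aeval fun v =>
    MvPolynomial.X (Sum.inl v.1.1) * MvPolynomial.X (Sum.inr v.1.2)


namespace PolyoAux

open Finset

lemma mem_cellVerts {v : ℕ × ℕ} {a : Cell} :
    v ∈ cellVerts a ↔ (v.1 = a.1 ∨ v.1 = a.1 + 1) ∧ (v.2 = a.2 ∨ v.2 = a.2 + 1) := by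
  simp only [cellVerts, Finset.mem_insert, Finset.mem_singleton, Prod.ext_iff]
  constructor
  · rintro (⟨h1, h2⟩ | ⟨h1, h2⟩ | ⟨h1, h2⟩ | ⟨h1, h2⟩) <;> simp_all <;> tauto
  · rintro ⟨h1 | h1, h2 | h2⟩ <;> tauto

lemma mem_verts_iff {P : Finset Cell} {x y : ℕ} : (x, y) ∈ verts P ↔
    ∃ c ∈ P, (c.1 = x ∨ c.1 + 1 = x) ∧ (c.2 = y ∨ c.2 + 1 = y) := by
  simp only [verts, Finset.mem_biUnion, mem_cellVerts]
  constructor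
  · rintro ⟨c, hc, ⟨h1, h2⟩⟩; exact ⟨c, hc, by tauto⟩
  · rintro ⟨c, hc, h1, h2⟩; exact ⟨c, hc, by tauto⟩

lemma adj_bounds {c d : Cell} (h : (cellVerts c ∩ cellVerts d).Nonempty) :
    c.1 ≤ d.1 + 1 ∧ d.1 ≤ c.1 + 1 ∧ c.2 ≤ d.2 + 1 ∧ d.2 ≤ c.2 + 1 := by
  obtain ⟨v, hv⟩ := h
  rw [Finset.mem_inter] at hv
  obtain ⟨h1, h2⟩ := hv
  rw [mem_cellVerts] at h1 h2
  omega

lemma crossing {P : Finset Cell} (f : Cell → ℕ)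
    (hf : ∀ c d : Cell, (cellVerts c ∩ cellVerts d).Nonempty → f c ≤ f d + 1 ∧ f d ≤ f c + 1)
    {c d : Cell} (h : Relation.ReflTransGen
      (fun a b => a ∈ P ∧ b ∈ P ∧ (cellVerts a ∩ cellVerts b).Nonempty) c d)
    {m : ℕ} (hcm : f c ≤ m) (hdm : m + 1 ≤ f d) :
    ∃ g ∈ P, ∃ h' ∈ P, f g = m ∧ f h' = m + 1 ∧ (cellVerts g ∩ cellVerts h').Nonempty := by
  revert hdm
  induction h with
  | refl => intro hdm; omega
  | @tail b d' hcb hbd ih =>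
      intro hdm
      by_cases hb : m + 1 ≤ f b
      · exact ih hb
      · have h2 := hf b d' hbd.2.2
        exact ⟨b, hbd.1, d', hbd.2.1, by omega, by omega, hbd.2.2⟩

lemma bottomWitness {P : Finset Cell} (hw : WeaklyConnected P) (hrc : RowConvex P)
    {i j k r : ℕ} (hij : (i, j) ∈ verts P) (hkj : (k, j) ∈ verts P)
    (h1 : i ≤ r) (h2 : r + 1 ≤ k) :
    ∃ p, (p = j ∨ p + 1 = j) ∧ (r, p) ∈ P := by
  rw [mem_verts_iff] at hij hkj
  obtain ⟨c, hcP, hc1, hc2⟩ := hij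
  obtain ⟨d, hdP, hd1, hd2⟩ := hkj
  have hcr : c.1 ≤ r := by omega
  have hdr : r ≤ d.1 := by omega
  by_cases hcd : c.2 = d.2
  · exact ⟨c.2, by omega, hrc c hcP d hdP hcd r hcr hdr⟩
  · have hcases : c.2 + 1 = j ∧ d.2 = j ∨ c.2 = j ∧ d.2 + 1 = j := by omega
    have hcross : ∃ g ∈ P, ∃ h' ∈ P, g.2 = j - 1 ∧ h'.2 = (j-1) + 1 ∧
        (cellVerts g ∩ cellVerts h').Nonempty := by
      rcases hcases with ⟨e1, e2⟩ | ⟨e1, e2⟩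
      · exact crossing Prod.snd (fun a b hab => by have := adj_bounds hab; omega)
          (hw c hcP d hdP) (by omega) (by omega)
      · exact crossing Prod.snd (fun a b hab => by have := adj_bounds hab; omega)
          (hw d hdP c hcP) (by omega) (by omega)
    obtain ⟨g, hgP, h', hhP, hg2, hh2, hadj⟩ := hcross
    have hgh := adj_bounds hadj
    rcases hcases with ⟨e1, e2⟩ | ⟨e1, e2⟩
    · by_cases hgr : r ≤ g.1
      · exact ⟨c.2, by omega, hrc c hcP g hgP (by omega) r hcr hgr⟩
      · exact ⟨h'.2, by omega, hrc h' hhP d hdP (by omega) r (by omega) hdr⟩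
    · by_cases hhr : r ≤ h'.1
      · exact ⟨c.2, by omega, hrc c hcP h' hhP (by omega) r hcr hhr⟩
      · exact ⟨g.2, by omega, hrc g hgP d hdP (by omega) r (by omega) hdr⟩

lemma innerInterval_of_corners {P : Finset Cell} (hw : WeaklyConnected P)
    (hrc : RowConvex P) (hcc : ColConvex P)
    {i j k l : ℕ} (hik : i < k) (hjl : j < l)
    (h1 : (i, j) ∈ verts P) (h2 : (i, l) ∈ verts P)
    (h3 : (k, j) ∈ verts P) (h4 : (k, l) ∈ verts P) :
    InnerInterval P (i, j) (k, l) := by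
  refine ⟨hik, hjl, fun r s hir hrk hjs hsl => ?_⟩
  obtain ⟨p, hp, hpP⟩ := bottomWitness hw hrc h1 h3 hir (by omega)
  obtain ⟨q, hq, hqP⟩ := bottomWitness hw hrc h2 h4 hir (by omega)
  exact hcc (r, p) hpP (r, q) hqP rfl s (by omega) (by omega)

lemma verts_col_convex {P : Finset Cell} (hw : WeaklyConnected P) (hcc : ColConvex P)
    {x y1 y y2 : ℕ} (h1 : (x, y1) ∈ verts P) (h2 : (x, y2) ∈ verts P)
    (hy1 : y1 ≤ y) (hy2 : y ≤ y2) : (x, y) ∈ verts P := by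
  rw [mem_verts_iff] at h1 h2 ⊢
  obtain ⟨c, hcP, hc1, hc2⟩ := h1
  obtain ⟨d, hdP, hd1, hd2⟩ := h2
  by_cases hcy : c.2 = y ∨ c.2 + 1 = y
  · exact ⟨c, hcP, hc1, hcy⟩
  by_cases hdy : d.2 = y ∨ d.2 + 1 = y
  · exact ⟨d, hdP, hd1, hdy⟩
  -- now c.2 + 1 < y ∧ y < d.2
  have hcl : c.2 + 1 < y := by omega
  have hdl : y < d.2 := by omega
  by_cases hcd : c.1 = d.1
  · exact ⟨(c.1, y - 1), hcc c hcP d hdP hcd (y - 1) (by omega) (by omega), by omega, by omega⟩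
  · have hcases : c.1 + 1 = x ∧ d.1 = x ∨ c.1 = x ∧ d.1 + 1 = x := by omega
    have hcross : ∃ g ∈ P, ∃ h' ∈ P, g.1 = x - 1 ∧ h'.1 = (x-1) + 1 ∧
        (cellVerts g ∩ cellVerts h').Nonempty := by
      rcases hcases with ⟨e1, e2⟩ | ⟨e1, e2⟩
      · exact crossing Prod.fst (fun a b hab => by have := adj_bounds hab; omega)
          (hw c hcP d hdP) (by omega) (by omega)
      · exact crossing Prod.fst (fun a b hab => by have := adj_bounds hab; omega)
          (hw d hdP c hcP) (by omega) (by omega)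
    obtain ⟨g, hgP, h', hhP, hg1, hh1, hadj⟩ := hcross
    have hgh := adj_bounds hadj
    rcases hcases with ⟨e1, e2⟩ | ⟨e1, e2⟩
    · -- c.1 = x - 1 side, d.1 = x
      by_cases hgy : y - 1 ≤ g.2
      · exact ⟨(c.1, y - 1), hcc c hcP g hgP (by omega) (y - 1) (by omega) hgy, by omega, by omega⟩
      · exact ⟨(h'.1, y - 1), hcc h' hhP d hdP (by omega) (y - 1) (by omega) (by omega),
          by omega, by omega⟩
    · -- c.1 = x, d.1 = x - 1 side
      by_cases hhy : y - 1 ≤ h'.2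
      · exact ⟨(c.1, y - 1), hcc c hcP h' hhP (by omega) (y - 1) (by omega) hhy, by omega, by omega⟩
      · exact ⟨(g.1, y - 1), hcc g hgP d hdP (by omega) (y - 1) (by omega) (by omega),
          by omega, by omega⟩

end PolyoAux

namespace PolyoAux

open MvPolynomial Finset

abbrev Vx (P : Finset Cell) := {v : ℕ × ℕ // v ∈ verts P}

/-- weight of a vertex -/
noncomputable def wt {P : Finset Cell} (v : Vx P) : (ℕ ⊕ ℕ) →₀ ℕ :=
  Finsupp.single (Sum.inl v.1.1) 1 + Finsupp.single (Sum.inr v.1.2) 1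

noncomputable def gam {P : Finset Cell} : (Vx P →₀ ℕ) →+ ((ℕ ⊕ ℕ) →₀ ℕ) :=
  Finsupp.liftAddHom fun v => multiplesHom _ (wt v)

lemma gam_single {P : Finset Cell} (v : Vx P) (n : ℕ) :
    gam (Finsupp.single v n) = n • wt v := by
  simp [gam, Finsupp.liftAddHom_apply_single, multiplesHom]

lemma gam_apply_inr {P : Finset Cell} (u : Vx P →₀ ℕ) (j : ℕ) :
    gam u (Sum.inr j) = u.sum fun v n => if v.1.2 = j then n else 0 := by
  rw [gam, Finsupp.liftAddHom_apply, Finsupp.sum_apply]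
  refine Finsupp.sum_congr fun v hv => ?_
  simp [wt, multiplesHom, Finsupp.single_apply, Finsupp.add_apply, Finsupp.smul_apply]

lemma gam_apply_inl {P : Finset Cell} (u : Vx P →₀ ℕ) (i : ℕ) :
    gam u (Sum.inl i) = u.sum fun v n => if v.1.1 = i then n else 0 := by
  rw [gam, Finsupp.liftAddHom_apply, Finsupp.sum_apply]
  refine Finsupp.sum_congr fun v hv => ?_
  simp [wt, multiplesHom, Finsupp.single_apply, Finsupp.add_apply, Finsupp.smul_apply]

lemma gam_inr_pos {P : Finset Cell} {u : Vx P →₀ ℕ} {v : Vx P} (hv : v ∈ u.support) :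
    0 < gam u (Sum.inr v.1.2) := by
  rw [gam_apply_inr, Finsupp.sum]
  have h1 : (if v.1.2 = v.1.2 then u v else 0) ≤ ∑ x ∈ u.support, if x.1.2 = v.1.2 then u x else 0 :=
    Finset.single_le_sum (f := fun x => if x.1.2 = v.1.2 then u x else 0) (fun x _ => by positivity) hv
  simp only [if_pos rfl] at h1
  exact lt_of_lt_of_le (Nat.pos_of_ne_zero (Finsupp.mem_support_iff.mp hv)) h1

lemma gam_inl_pos {P : Finset Cell} {u : Vx P →₀ ℕ} {v : Vx P} (hv : v ∈ u.support) :
    0 < gam u (Sum.inl v.1.1) := by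
  rw [gam_apply_inl, Finsupp.sum]
  have h1 : (if v.1.1 = v.1.1 then u v else 0) ≤ ∑ x ∈ u.support, if x.1.1 = v.1.1 then u x else 0 :=
    Finset.single_le_sum (f := fun x => if x.1.1 = v.1.1 then u x else 0) (fun x _ => by positivity) hv
  simp only [if_pos rfl] at h1
  exact lt_of_lt_of_le (Nat.pos_of_ne_zero (Finsupp.mem_support_iff.mp hv)) h1

lemma exists_same_col {P : Finset Cell} {u w : Vx P →₀ ℕ} (h : gam u = gam w)
    {v : Vx P} (hv : v ∈ u.support) : ∃ v' ∈ w.support, v'.1.2 = v.1.2 := by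
  have h1 : 0 < gam w (Sum.inr v.1.2) := h ▸ gam_inr_pos hv
  rw [gam_apply_inr, Finsupp.sum] at h1
  by_contra hcon
  push_neg at hcon
  rw [Finset.sum_eq_zero (fun x hx => if_neg (hcon x hx))] at h1
  omega

lemma exists_same_row {P : Finset Cell} {u w : Vx P →₀ ℕ} (h : gam u = gam w)
    {v : Vx P} (hv : v ∈ u.support) : ∃ v' ∈ w.support, v'.1.1 = v.1.1 := by
  have h1 : 0 < gam w (Sum.inl v.1.1) := h ▸ gam_inl_pos hv
  rw [gam_apply_inl, Finsupp.sum] at h1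
  by_contra hcon
  push_neg at hcon
  rw [Finset.sum_eq_zero (fun x hx => if_neg (hcon x hx))] at h1
  omega

lemma gam_eq_zero {P : Finset Cell} {u : Vx P →₀ ℕ} (h : gam u = 0) : u = 0 := by
  by_contra hu
  obtain ⟨v, hv⟩ := Finsupp.support_nonempty_iff.mpr hu
  have := gam_inr_pos hv
  rw [h] at this
  simp at this

variable {K : Type*} [Field K]

lemma phi_monomial {P : Finset Cell} (u : Vx P →₀ ℕ) (c : K) :
    phiP K P (monomial u c) = monomial (gam u) c := by
  induction u using Finsupp.induction with
  | zero => simp [phiP, map_zero, monomial_zero', algHom_C]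
  | single_add v n u hvu hn ih =>
    have e1 : monomial (Finsupp.single v n + u) c
        = monomial (Finsupp.single v n) (1:K) * monomial u c := by
      rw [monomial_mul, one_mul]
    rw [e1, map_mul, ih, ← X_pow_eq_monomial, map_pow]
    have e2 : phiP K P (X v) = X (Sum.inl v.1.1) * X (Sum.inr v.1.2) := aeval_X _ v
    rw [e2]
    have e3 : (X (Sum.inl v.1.1) * X (Sum.inr v.1.2) : MvPolynomial (ℕ ⊕ ℕ) K)
        = monomial (wt v) 1 := by
      rw [wt, monomial_single_add, ← X_pow_eq_monomial, pow_one, pow_one]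
    rw [e3, monomial_pow, one_pow, monomial_mul, one_mul, map_add, gam_single]

lemma monomial_sub_mul {P : Finset Cell} (a u1 w1 : Vx P →₀ ℕ) :
    (monomial a 1 : MvPolynomial (Vx P) K) * (monomial u1 1 - monomial w1 1)
      = monomial (a + u1) 1 - monomial (a + w1) 1 := by
  rw [mul_sub, monomial_mul, monomial_mul, one_mul]

lemma chain_mem {P : Finset Cell} {I : Ideal (MvPolynomial (Vx P) K)}
    {uC wC a b u1 w1 u2 w2 : Vx P →₀ ℕ}
    (h1 : (monomial u1 1 - monomial w1 1 : MvPolynomial (Vx P) K) ∈ I)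
    (h2 : (monomial u2 1 - monomial w2 1 : MvPolynomial (Vx P) K) ∈ I)
    (e1 : uC = a + u1) (e2 : a + w1 = b + u2) (e3 : wC = b + w2) :
    (monomial uC 1 - monomial wC 1 : MvPolynomial (Vx P) K) ∈ I := by
  have heq : monomial uC (1:K) - monomial wC 1
      = monomial a 1 * (monomial u1 1 - monomial w1 1)
        + monomial b 1 * (monomial u2 1 - monomial w2 1) := by
    rw [monomial_sub_mul, monomial_sub_mul, ← e1, e2, ← e3]
    ring
  rw [heq]
  exact add_mem (Ideal.mul_mem_left _ _ h1) (Ideal.mul_mem_left _ _ h2)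

lemma inner_le_ker {P : Finset Cell} :
    innerIdeal K P ≤ RingHom.ker (phiP K P).toRingHom := by
  rw [innerIdeal, Ideal.span_le]
  rintro f ⟨a, b, c, d, hI, hc, hd, rfl⟩
  simp only [SetLike.mem_coe, RingHom.mem_ker, AlgHom.toRingHom_eq_coe, RingHom.coe_coe]
  rw [map_sub, map_mul, map_mul]
  simp only [phiP, aeval_X]
  rw [hc, hd]
  ring

end PolyoAux

namespace PolyoAux

open MvPolynomial Finset

def IsWalk (P : Finset Cell) (r : ℕ) (B R : ℕ → Vx P) : Prop :=
  ∀ t, t < r → (R t).1.2 = (B t).1.2 ∧ (R t).1.1 = (B ((t + 1) % r)).1.1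

noncomputable def blues {P : Finset Cell} (r : ℕ) (B : ℕ → Vx P) : Vx P →₀ ℕ :=
  ∑ t ∈ range r, Finsupp.single (B t) 1

lemma sum_shift {M : Type*} [AddCommMonoid M] (r : ℕ) (f : ℕ → M) :
    ∑ t ∈ range r, f ((t + 1) % r) = ∑ t ∈ range r, f t := by
  cases r with
  | zero => simp
  | succ n =>
    rw [Finset.sum_range_succ, Nat.mod_self, Finset.sum_range_succ' (fun i => f i) n]
    congr 1
    refine Finset.sum_congr rfl fun t ht => ?_
    rw [Nat.mod_eq_of_lt (by simp at ht; omega)]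

lemma sum_rot {M : Type*} [AddCommMonoid M] (r k : ℕ) (f : ℕ → M) :
    ∑ t ∈ range r, f ((t + k) % r) = ∑ t ∈ range r, f (t % r) := by
  induction k with
  | zero => simp
  | succ k ih =>
    calc ∑ t ∈ range r, f ((t + (k + 1)) % r)
        = ∑ t ∈ range r, f ((((t + 1) % r) + k) % r) := by
          refine Finset.sum_congr rfl fun t _ => ?_
          rw [Nat.mod_add_mod, show t + (k + 1) = t + 1 + k by omega]
      _ = ∑ t ∈ range r, f ((t + k) % r) := sum_shift r (fun s => f ((s + k) % r))
      _ = _ := ih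

lemma sum_rot' {M : Type*} [AddCommMonoid M] (r k : ℕ) (f : ℕ → M) :
    ∑ t ∈ range r, f ((t + k) % r) = ∑ t ∈ range r, f t := by
  rw [sum_rot]
  exact Finset.sum_congr rfl fun t ht => by rw [Nat.mod_eq_of_lt (Finset.mem_range.mp ht)]

lemma isWalk_rot {P : Finset Cell} {r : ℕ} {B R : ℕ → Vx P} (h : IsWalk P r B R)
    (k : ℕ) (hr : 0 < r) :
    IsWalk P r (fun t => B ((t + k) % r)) (fun t => R ((t + k) % r)) := by
  intro t ht
  obtain ⟨h1, h2⟩ := h ((t + k) % r) (Nat.mod_lt _ hr)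
  refine ⟨h1, ?_⟩
  show (R ((t + k) % r)).1.1 = (B ((((t + 1) % r) + k) % r)).1.1
  have e : ((t + k) % r + 1) % r = (((t + 1) % r) + k) % r := by
    rw [Nat.mod_add_mod, Nat.mod_add_mod]
    congr 1
    omega
  rw [h2, e]

lemma blues_rot {P : Finset Cell} (r k : ℕ) (B : ℕ → Vx P) :
    blues r (fun t => B ((t + k) % r)) = blues r B := by
  simp only [blues]
  exact sum_rot' r k (fun t => Finsupp.single (B t) 1)

lemma gam_walk {P : Finset Cell} {r : ℕ} {B R : ℕ → Vx P} (h : IsWalk P r B R) :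
    gam (blues r B) = gam (blues r R) := by
  rw [blues, blues, map_sum, map_sum]
  have e : ∀ S : ℕ → Vx P, ∀ t : ℕ, gam (Finsupp.single (S t) 1)
      = Finsupp.single (Sum.inl (S t).1.1) 1 + Finsupp.single (Sum.inr (S t).1.2) 1 := by
    intro S t; rw [gam_single, one_smul, wt]
  rw [Finset.sum_congr rfl (fun t _ => e B t), Finset.sum_congr rfl (fun t _ => e R t),
    Finset.sum_add_distrib, Finset.sum_add_distrib]
  congr 1
  · rw [← sum_shift r (fun t => Finsupp.single (Sum.inl ((B t).1.1)) (1 : ℕ))]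
    exact Finset.sum_congr rfl fun t ht => by rw [(h t (mem_range.mp ht)).2]
  · exact Finset.sum_congr rfl fun t ht => by rw [(h t (mem_range.mp ht)).1]

lemma blues_split {P : Finset Cell} (r t : ℕ) (htr : t ≤ r) (B : ℕ → Vx P) :
    blues r B = blues t B + blues (r - t) (fun m => B (t + m)) := by
  simp only [blues]
  rw [show r = t + (r - t) by omega, Finset.sum_range_add, Nat.add_sub_cancel_left]

lemma blues_succ {P : Finset Cell} (n : ℕ) (B : ℕ → Vx P) :
    blues (n + 1) B = blues n B + Finsupp.single (B n) 1 := by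
  simp only [blues, Finset.sum_range_succ]

end PolyoAux

namespace PolyoAux

open MvPolynomial Finset

variable {K : Type*} [Field K]

lemma blues_two {P : Finset Cell} (B : ℕ → Vx P) :
    blues 2 B = Finsupp.single (B 0) 1 + Finsupp.single (B 1) 1 := by
  simp [blues, Finset.sum_range_succ]

lemma monomial_pair {P : Finset Cell} (a b : Vx P) :
    (monomial (Finsupp.single a 1 + Finsupp.single b 1) 1 : MvPolynomial (Vx P) K)
      = X a * X b := by
  rw [monomial_single_add, ← X_pow_eq_monomial, pow_one, pow_one]

lemma row_split {P : Finset Cell} {r : ℕ} {B R : ℕ → Vx P} (hWalk : IsWalk P r B R)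
    {t : ℕ} (ht0 : 0 < t) (htr : t < r) (hrow : (B 0).1.1 = (B t).1.1)
    (ihyp : ∀ r' : ℕ, r' < r → ∀ B' R' : ℕ → Vx P, IsWalk P r' B' R' →
      (monomial (blues r' B') 1 - monomial (blues r' R') 1 : MvPolynomial (Vx P) K)
        ∈ innerIdeal K P) :
    (monomial (blues r B) 1 - monomial (blues r R) 1 : MvPolynomial (Vx P) K)
      ∈ innerIdeal K P := by
  have hW1 : IsWalk P t B R := by
    intro m hm
    obtain ⟨h1, h2⟩ := hWalk m (by omega)
    refine ⟨h1, ?_⟩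
    rw [h2]
    rcases Nat.lt_or_ge (m + 1) t with hlt | hge
    · rw [Nat.mod_eq_of_lt (by omega), Nat.mod_eq_of_lt hlt]
    · have hmt : m + 1 = t := by omega
      rw [Nat.mod_eq_of_lt (by omega), hmt, Nat.mod_self]
      exact hrow.symm
  have hW2 : IsWalk P (r - t) (fun m => B (t + m)) (fun m => R (t + m)) := by
    intro m hm
    obtain ⟨h1, h2⟩ := hWalk (t + m) (by omega)
    refine ⟨h1, ?_⟩
    show (R (t + m)).1.1 = (B (t + (m + 1) % (r - t))).1.1
    rw [h2]
    rcases Nat.lt_or_ge (m + 1) (r - t) with hlt | hge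
    · rw [Nat.mod_eq_of_lt (by omega), Nat.mod_eq_of_lt hlt,
        show t + m + 1 = t + (m + 1) by omega]
    · have hmt : m + 1 = r - t := by omega
      have e0 : (t + m + 1) % r = 0 := by
        rw [show t + m + 1 = r by omega, Nat.mod_self]
      rw [e0, hmt, Nat.mod_self]
      exact hrow
  exact chain_mem (ihyp t (by omega) B R hW1) (ihyp (r - t) (by omega) _ _ hW2)
    (by rw [blues_split r t (le_of_lt htr) B, add_comm]) (add_comm _ _)
    (blues_split r t (le_of_lt htr) R)

lemma col_split {P : Finset Cell} {r : ℕ} {B R : ℕ → Vx P} (hWalk : IsWalk P r B R)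
    {m : ℕ} (hm : m + 1 < r) (hcol : (B m).1.2 = (B (r - 1)).1.2)
    (ihyp : ∀ r' : ℕ, r' < r → ∀ B' R' : ℕ → Vx P, IsWalk P r' B' R' →
      (monomial (blues r' B') 1 - monomial (blues r' R') 1 : MvPolynomial (Vx P) K)
        ∈ innerIdeal K P) :
    (monomial (blues r B) 1 - monomial (blues r R) 1 : MvPolynomial (Vx P) K)
      ∈ innerIdeal K P := by
  set R1 : ℕ → Vx P := fun u => if u = m then R (r - 1) else R u with hR1
  set B2 : ℕ → Vx P := fun u => B (m + 1 + u) with hB2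
  set R2 : ℕ → Vx P := fun u => if u = r - m - 2 then R m else R (m + 1 + u) with hR2
  have hW1 : IsWalk P (m + 1) B R1 := by
    intro u hu
    rcases Nat.lt_or_ge u m with hlt | hge
    · obtain ⟨h1, h2⟩ := hWalk u (by omega)
      have hne : u ≠ m := by omega
      refine ⟨?_, ?_⟩ <;> simp only [hR1] <;> rw [if_neg hne]
      · exact h1
      · rw [h2, Nat.mod_eq_of_lt (by omega), Nat.mod_eq_of_lt (by omega)]
    · have hu' : u = m := by omega
      subst hu'
      obtain ⟨h1, h2⟩ := hWalk (r - 1) (by omega)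
      constructor
      · simp only [hR1, if_pos]
        rw [h1, ← hcol]
      · simp only [hR1, if_pos]
        rw [h2, show r - 1 + 1 = r by omega, Nat.mod_self, Nat.mod_self]
  have hW2 : IsWalk P (r - (m + 1)) B2 R2 := by
    intro u hu
    rcases Nat.lt_or_ge u (r - m - 2) with hlt | hge
    · obtain ⟨h1, h2⟩ := hWalk (m + 1 + u) (by omega)
      have hne : u ≠ r - m - 2 := by omega
      refine ⟨?_, ?_⟩ <;> simp only [hR2, hB2] <;> rw [if_neg hne]
      · exact h1
      · rw [h2, Nat.mod_eq_of_lt (by omega), Nat.mod_eq_of_lt (by omega),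
          show m + 1 + u + 1 = m + 1 + (u + 1) by omega]
    · have hu' : u = r - m - 2 := by omega
      subst hu'
      obtain ⟨h1, h2⟩ := hWalk m (by omega)
      constructor
      · simp only [hR2, hB2, if_pos]
        rw [h1, hcol, show m + 1 + (r - m - 2) = r - 1 by omega]
      · simp only [hR2, hB2, if_pos]
        rw [h2, Nat.mod_eq_of_lt (by omega),
          show (r - m - 2 + 1) % (r - (m + 1)) = 0 by
            rw [show r - m - 2 + 1 = r - (m + 1) by omega]; exact Nat.mod_self _,
          show m + 1 + 0 = m + 1 by omega]
  have hw1 : blues (m + 1) R1 = blues m R + Finsupp.single (R (r - 1)) 1 := by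
    rw [blues_succ]
    congr 1
    · simp only [blues]
      refine Finset.sum_congr rfl fun u hu => ?_
      have hne : u ≠ m := by simp at hu; omega
      simp only [hR1]
      rw [if_neg hne]
    · simp [hR1]
  have hw2 : blues (r - (m + 1)) R2
      = blues (r - m - 2) (fun u => R (m + 1 + u)) + Finsupp.single (R m) 1 := by
    rw [show r - (m + 1) = (r - m - 2) + 1 by omega, blues_succ]
    congr 1
    · simp only [blues]
      refine Finset.sum_congr rfl fun u hu => ?_
      have hne : u ≠ r - m - 2 := by simp at hu; omega
      simp only [hR2]
      rw [if_neg hne]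
    · simp [hR2]
  have e3 : blues r R = blues (m + 1) R1 + blues (r - (m + 1)) R2 := by
    rw [hw1, hw2]
    conv_lhs => rw [show r = (r - 1) + 1 by omega, blues_succ]
    rw [blues_split (r - 1) (m + 1) (by omega) R, blues_succ,
      show r - 1 - (m + 1) = r - m - 2 by omega]
    abel
  have e1 : blues r B = blues (r - (m + 1)) B2 + blues (m + 1) B := by
    rw [blues_split r (m + 1) (by omega) B, add_comm]
  exact chain_mem (ihyp (m + 1) (by omega) B R1 hW1)
    (ihyp (r - (m + 1)) (by omega) B2 R2 hW2) e1 (add_comm _ _) e3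

lemma quad_mem {P : Finset Cell} (hw : WeaklyConnected P) (hrc : RowConvex P)
    (hcc : ColConvex P) {B R : ℕ → Vx P} (hWalk : IsWalk P 2 B R)
    (hrow : (B 0).1.1 ≠ (B 1).1.1) (hcol : (B 0).1.2 ≠ (B 1).1.2) :
    (monomial (blues 2 B) 1 - monomial (blues 2 R) 1 : MvPolynomial (Vx P) K)
      ∈ innerIdeal K P := by
  obtain ⟨hc0, hr0⟩ := hWalk 0 (by omega)
  obtain ⟨hc1, hr1⟩ := hWalk 1 (by omega)
  norm_num at hr0 hr1
  have hR0 : (R 0).1 = ((B 1).1.1, (B 0).1.2) := Prod.ext hr0 hc0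
  have hR1 : (R 1).1 = ((B 0).1.1, (B 1).1.2) := Prod.ext hr1 hc1
  have hbin : (monomial (blues 2 B) 1 - monomial (blues 2 R) 1 : MvPolynomial (Vx P) K)
      = X (B 0) * X (B 1) - X (R 0) * X (R 1) := by
    rw [blues_two, blues_two, monomial_pair, monomial_pair]
  rw [hbin]
  have hVB0 : ((B 0).1.1, (B 0).1.2) ∈ verts P := by rw [Prod.mk.eta]; exact (B 0).2
  have hVB1 : ((B 1).1.1, (B 1).1.2) ∈ verts P := by rw [Prod.mk.eta]; exact (B 1).2
  have hVR0 : ((B 1).1.1, (B 0).1.2) ∈ verts P := hR0 ▸ (R 0).2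
  have hVR1 : ((B 0).1.1, (B 1).1.2) ∈ verts P := hR1 ▸ (R 1).2
  rcases Nat.lt_or_ge (B 0).1.1 (B 1).1.1 with hi | hi <;>
    rcases Nat.lt_or_ge (B 0).1.2 (B 1).1.2 with hj | hj
  · -- i0 < i1, j0 < j1 : minor (B0, B1, R0, R1)
    refine Ideal.subset_span ⟨B 0, B 1, R 0, R 1, ?_, hR0, hR1, rfl⟩
    have := innerInterval_of_corners hw hrc hcc hi hj hVB0 hVR1 hVR0 hVB1
    simpa [Prod.mk.eta] using this
  · -- i0 < i1, j1 < j0 (j1 ≤ j0, ≠) : -minor (R1, R0, B1, B0)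
    have hj' : (B 1).1.2 < (B 0).1.2 := by omega
    have hmem : (X (R 1) * X (R 0) - X (B 1) * X (B 0) : MvPolynomial (Vx P) K)
        ∈ innerIdeal K P := by
      refine Ideal.subset_span ⟨R 1, R 0, B 1, B 0, ?_, ?_, ?_, rfl⟩
      · have := innerInterval_of_corners hw hrc hcc hi hj' hVR1 hVB0 hVB1 hVR0
        rw [hR0, hR1]
        simpa using this
      · rw [hR0, hR1]
      · rw [hR0, hR1]
    have : (X (B 0) * X (B 1) - X (R 0) * X (R 1) : MvPolynomial (Vx P) K)
        = -(X (R 1) * X (R 0) - X (B 1) * X (B 0)) := by ring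
    rw [this]
    exact neg_mem hmem
  · -- i1 < i0, j0 < j1 : -minor (R0, R1, B0, B1)
    have hi' : (B 1).1.1 < (B 0).1.1 := by omega
    have hmem : (X (R 0) * X (R 1) - X (B 0) * X (B 1) : MvPolynomial (Vx P) K)
        ∈ innerIdeal K P := by
      refine Ideal.subset_span ⟨R 0, R 1, B 0, B 1, ?_, ?_, ?_, rfl⟩
      · have := innerInterval_of_corners hw hrc hcc hi' hj hVR0 hVB1 hVB0 hVR1
        rw [hR0, hR1]
        simpa using this
      · rw [hR0, hR1]
      · rw [hR0, hR1]
    have : (X (B 0) * X (B 1) - X (R 0) * X (R 1) : MvPolynomial (Vx P) K)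
        = -(X (R 0) * X (R 1) - X (B 0) * X (B 1)) := by ring
    rw [this]
    exact neg_mem hmem
  · -- i1 < i0, j1 < j0 : minor (B1, B0, R1, R0)
    have hi' : (B 1).1.1 < (B 0).1.1 := by omega
    have hj' : (B 1).1.2 < (B 0).1.2 := by omega
    have hmem : (X (B 1) * X (B 0) - X (R 1) * X (R 0) : MvPolynomial (Vx P) K)
        ∈ innerIdeal K P := by
      refine Ideal.subset_span ⟨B 1, B 0, R 1, R 0, ?_, ?_, ?_, rfl⟩
      · have := innerInterval_of_corners hw hrc hcc hi' hj' hVB1 hVR0 hVR1 hVB0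
        simpa [Prod.mk.eta] using this
      · rw [hR1]
      · rw [hR0]
    have : (X (B 0) * X (B 1) - X (R 0) * X (R 1) : MvPolynomial (Vx P) K)
        = X (B 1) * X (B 0) - X (R 1) * X (R 0) := by ring
    rw [this]
    exact hmem

end PolyoAux

namespace PolyoAux

open MvPolynomial Finset

variable {K : Type*} [Field K]

lemma mod_inj {r k s t : ℕ} (hs : s < r) (ht : t < r) (h : (s + k) % r = (t + k) % r) :
    s = t := by
  have h1 : s % r = t % r := Nat.ModEq.add_right_cancel' k h
  rwa [Nat.mod_eq_of_lt hs, Nat.mod_eq_of_lt ht] at h1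

set_option maxHeartbeats 1000000 in
lemma walk_mem {P : Finset Cell} (hw : WeaklyConnected P)
    (hrc : RowConvex P) (hcc : ColConvex P) :
    ∀ r : ℕ, ∀ B R : ℕ → Vx P, IsWalk P r B R →
      (monomial (blues r B) 1 - monomial (blues r R) 1 : MvPolynomial (Vx P) K)
        ∈ innerIdeal K P := by
  intro r
  induction r using Nat.strong_induction_on with
  | _ r ih =>
    intro B R hWalk
    rcases Nat.lt_or_ge r 2 with hr2 | hr2
    · interval_cases r
      · simp only [blues, Finset.range_zero, Finset.sum_empty, sub_self]
        exact zero_mem _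
      · have h01 := hWalk 0 (by omega)
        have hRB : R 0 = B 0 := Subtype.ext (Prod.ext (by simpa using h01.2) h01.1)
        have hbl : blues 1 R = blues 1 B := by simp [blues, hRB]
        rw [hbl, sub_self]
        exact zero_mem _
    · by_cases hrow : ∃ s t, s < t ∧ t < r ∧ (B s).1.1 = (B t).1.1
      · obtain ⟨s, t, hst, htr, hBst⟩ := hrow
        set B' := fun u => B ((u + s) % r) with hB'
        set R' := fun u => R ((u + s) % r) with hR'
        have hW' : IsWalk P r B' R' := isWalk_rot hWalk s (by omega)
        have hr0 : (B' 0).1.1 = (B' (t - s)).1.1 := by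
          simp only [hB']
          rw [show (0 + s) % r = s from by rw [Nat.zero_add]; exact Nat.mod_eq_of_lt (by omega),
            show (t - s + s) % r = t from by
              rw [show t - s + s = t by omega]; exact Nat.mod_eq_of_lt htr]
          exact hBst
        have hmem := row_split (K := K) hW' (by omega) (by omega : t - s < r) hr0 ih
        simp only [hB', hR'] at hmem
        rwa [blues_rot, blues_rot] at hmem
      · by_cases hcol : ∃ s t, s < t ∧ t < r ∧ (B s).1.2 = (B t).1.2
        · obtain ⟨s, t, hst, htr, hBst⟩ := hcol
          set B' := fun u => B ((u + (t + 1)) % r) with hB'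
          set R' := fun u => R ((u + (t + 1)) % r) with hR'
          have hW' : IsWalk P r B' R' := isWalk_rot hWalk (t + 1) (by omega)
          have e1 : (r - 1 - (t - s) + (t + 1)) % r = s := by
            rw [show r - 1 - (t - s) + (t + 1) = r + s by omega, Nat.add_mod_left,
              Nat.mod_eq_of_lt (by omega)]
          have e2 : (r - 1 + (t + 1)) % r = t := by
            rw [show r - 1 + (t + 1) = r + t by omega, Nat.add_mod_left,
              Nat.mod_eq_of_lt htr]
          have hcc' : (B' (r - 1 - (t - s))).1.2 = (B' (r - 1)).1.2 := by
            simp only [hB']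
            rw [e1, e2]
            exact hBst
          have hmem := col_split (K := K) hW' (by omega : r - 1 - (t - s) + 1 < r) hcc' ih
          simp only [hB', hR'] at hmem
          rwa [blues_rot, blues_rot] at hmem
        · push_neg at hrow hcol
          rcases Nat.lt_or_ge r 3 with hr3 | hr3
          · have hr : r = 2 := by omega
            subst hr
            exact quad_mem hw hrc hcc hWalk (hrow 0 1 (by omega) (by omega))
              (hcol 0 1 (by omega) (by omega))
          · -- chord case
            obtain ⟨t0, ht0r, ht0min⟩ : ∃ t0, t0 < r ∧ ∀ u < r, (B t0).1.2 ≤ (B u).1.2 := by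
              obtain ⟨t0, ht0, hmin⟩ := Finset.exists_min_image (range r)
                (fun u => (B u).1.2) ⟨0, by simp; omega⟩
              exact ⟨t0, by simpa using ht0, fun u hu => hmin u (by simpa using hu)⟩
            set k := t0 + r - 1 with hk
            set C := fun u => B ((u + k) % r) with hC
            set S := fun u => R ((u + k) % r) with hS
            have hW' : IsWalk P r C S := isWalk_rot hWalk k (by omega)
            suffices hsuf : (monomial (blues r C) 1 - monomial (blues r S) 1 :
                MvPolynomial (Vx P) K) ∈ innerIdeal K P by
              simp only [hC, hS] at hsuf
              rwa [blues_rot, blues_rot] at hsuf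
            have hk1 : (1 + k) % r = t0 := by
              rw [show 1 + k = t0 + r by omega, Nat.add_mod_right, Nat.mod_eq_of_lt ht0r]
            have hmin' : ∀ u, u < r → u ≠ 1 → (C 1).1.2 < (C u).1.2 := by
              intro u hur hu1
              simp only [hC, hk1]
              have h1 : (B t0).1.2 ≤ (B ((u + k) % r)).1.2 :=
                ht0min _ (Nat.mod_lt _ (by omega))
              have h2 : (B t0).1.2 ≠ (B ((u + k) % r)).1.2 := by
                have hne : (u + k) % r ≠ t0 := by
                  intro hcon
                  apply hu1
                  refine mod_inj (k := k) hur (by omega) ?_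
                  rw [hcon, hk1]
                rcases Nat.lt_or_ge t0 ((u + k) % r) with hlt | hge
                · exact hcol _ _ hlt (Nat.mod_lt _ (by omega))
                · have hlt : (u + k) % r < t0 := by omega
                  exact fun hcon => hcol _ _ hlt ht0r hcon.symm
              omega
            clear hk1 hrow hcol ht0min hWalk
            have hS0 : (S 0).1 = ((C 1).1.1, (C 0).1.2) := by
              obtain ⟨h1, h2⟩ := hW' 0 (by omega)
              exact Prod.ext (by rw [h2, Nat.mod_eq_of_lt (by omega)]) h1
            have hS1 : (S 1).1 = ((C 2).1.1, (C 1).1.2) := by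
              obtain ⟨h1, h2⟩ := hW' 1 (by omega)
              exact Prod.ext (by rw [h2, Nat.mod_eq_of_lt (by omega)]) h1
            have hVC : ∀ u : ℕ, ((C u).1.1, (C u).1.2) ∈ verts P := by
              intro u; rw [Prod.mk.eta]; exact (C u).2
            rcases Nat.lt_or_ge (C 2).1.2 (C 0).1.2 with hcase | hcase
            · -- Case B : j2 < j0, chord ((C 1).1.1, (C 2).1.2)
              have hvB : ((C 1).1.1, (C 2).1.2) ∈ verts P := by
                refine verts_col_convex hw hcc (hVC 1) (hS0 ▸ (S 0).2)
                  (le_of_lt (hmin' 2 (by omega) (by omega))) (le_of_lt hcase)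
              set cB : Vx P := ⟨((C 1).1.1, (C 2).1.2), hvB⟩ with hcB
              set B1 : ℕ → Vx P := fun u => if u = 0 then C 1 else C 2 with hB1d
              set R1 : ℕ → Vx P := fun u => if u = 0 then S 1 else cB with hR1d
              set B2 : ℕ → Vx P :=
                fun u => if u = 0 then C 0 else if u = 1 then cB else C (u + 1) with hB2d
              set R2 : ℕ → Vx P := fun u => if u = 0 then S 0 else S (u + 1) with hR2d
              have hWC1 : IsWalk P 2 B1 R1 := by
                intro u hu
                interval_cases u
                · constructor
                  · show (S 1).1.2 = (C 1).1.2
                    exact (hW' 1 (by omega)).1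
                  · show (S 1).1.1 = (C 2).1.1
                    rw [hS1]
                · constructor
                  · show cB.1.2 = (C 2).1.2
                    rfl
                  · show cB.1.1 = (C 1).1.1
                    rfl
              have hWC2 : IsWalk P (r - 1) B2 R2 := by
                intro u hu
                rcases (show u = 0 ∨ u = 1 ∨ 2 ≤ u by omega) with rfl | rfl | hu2
                · constructor
                  · show (S 0).1.2 = (C 0).1.2
                    exact (hW' 0 (by omega)).1
                  · show (S 0).1.1 = (B2 ((0 + 1) % (r - 1))).1.1
                    rw [show (0 + 1) % (r - 1) = 1 from Nat.mod_eq_of_lt (by omega)]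
                    show (S 0).1.1 = (C 1).1.1
                    rw [hS0]
                · constructor
                  · show (S 2).1.2 = (C 2).1.2
                    exact (hW' 2 (by omega)).1
                  · show (S 2).1.1 = (B2 ((1 + 1) % (r - 1))).1.1
                    have h2' := (hW' 2 (by omega)).2
                    rcases Nat.lt_or_ge 3 r with h3 | h3
                    · rw [show (1 + 1) % (r - 1) = 2 from Nat.mod_eq_of_lt (by omega)]
                      show (S 2).1.1 = (C (2 + 1)).1.1
                      rw [h2', Nat.mod_eq_of_lt (by omega)]
                    · have hr3' : r = 3 := by omega
                      rw [show (1 + 1) % (r - 1) = 0 from by rw [hr3']]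
                      show (S 2).1.1 = (C 0).1.1
                      rw [h2', show (2 + 1) % r = 0 from by rw [hr3']]
                · have hne0 : u ≠ 0 := by omega
                  have hne1 : u ≠ 1 := by omega
                  obtain ⟨h1, h2⟩ := hW' (u + 1) (by omega)
                  constructor
                  · simp only [hR2d, hB2d]
                    rw [if_neg hne0, if_neg hne0, if_neg hne1]
                    exact h1
                  · simp only [hR2d, hB2d]
                    rw [if_neg hne0]
                    rcases Nat.lt_or_ge (u + 1) (r - 1) with hult | hueq
                    · rw [show (u + 1) % (r - 1) = u + 1 from Nat.mod_eq_of_lt hult,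
                        if_neg (show u + 1 ≠ 0 by omega), if_neg (show u + 1 ≠ 1 by omega)]
                      rw [h2, Nat.mod_eq_of_lt (by omega)]
                    · rw [show (u + 1) % (r - 1) = 0 from by
                          rw [show u + 1 = r - 1 by omega]; exact Nat.mod_self _, if_pos rfl]
                      rw [h2, show (u + 1 + 1) % r = 0 from by
                          rw [show u + 1 + 1 = r by omega]; exact Nat.mod_self _]
              have hB1dec : blues 2 B1 = Finsupp.single (C 1) 1 + Finsupp.single (C 2) 1 := by
                rw [blues_two]; simp [hB1d]
              have hR1dec : blues 2 R1 = Finsupp.single (S 1) 1 + Finsupp.single cB 1 := by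
                rw [blues_two]; simp [hR1d]
              have hB2dec : blues (r - 1) B2
                  = Finsupp.single (C 0) 1 + Finsupp.single cB 1
                    + blues (r - 3) (fun m => C (3 + m)) := by
                have hhead : blues 2 B2 = Finsupp.single (C 0) 1 + Finsupp.single cB 1 := by
                  rw [blues_two]; simp [hB2d]
                have htail : blues (r - 3) (fun m => B2 (2 + m))
                    = blues (r - 3) (fun m => C (3 + m)) := by
                  simp only [blues]
                  refine Finset.sum_congr rfl fun m hm => ?_
                  simp only [hB2d]
                  rw [if_neg (show 2 + m ≠ 0 by omega), if_neg (show 2 + m ≠ 1 by omega),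
                    show 2 + m + 1 = 3 + m by omega]
                rw [blues_split (r - 1) 2 (by omega) B2,
                  show r - 1 - 2 = r - 3 by omega, hhead, htail]
              have hR2dec : blues (r - 1) R2
                  = Finsupp.single (S 0) 1 + blues (r - 2) (fun m => S (2 + m)) := by
                have hhead : blues 1 R2 = Finsupp.single (S 0) 1 := by
                  simp [blues, hR2d]
                have htail : blues (r - 2) (fun m => R2 (1 + m))
                    = blues (r - 2) (fun m => S (2 + m)) := by
                  simp only [blues]
                  refine Finset.sum_congr rfl fun m hm => ?_
                  simp only [hR2d]
                  rw [if_neg (show 1 + m ≠ 0 by omega), show 1 + m + 1 = 2 + m by omega]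
                rw [blues_split (r - 1) 1 (by omega) R2,
                  show r - 1 - 1 = r - 2 by omega, hhead, htail]
              have hCdec : blues r C = Finsupp.single (C 0) 1 + Finsupp.single (C 1) 1
                  + Finsupp.single (C 2) 1 + blues (r - 3) (fun m => C (3 + m)) := by
                have h1 : blues 3 C = Finsupp.single (C 0) 1 + Finsupp.single (C 1) 1
                    + Finsupp.single (C 2) 1 := by
                  rw [show blues 3 C = blues 2 C + Finsupp.single (C 2) 1 from blues_succ 2 C,
                    blues_two]
                rw [blues_split r 3 (by omega) C, h1]
              have hSdec : blues r S = Finsupp.single (S 0) 1 + Finsupp.single (S 1) 1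
                  + blues (r - 2) (fun m => S (2 + m)) := by
                rw [blues_split r 2 (by omega) S, blues_two]
              refine chain_mem (ih 2 (by omega) B1 R1 hWC1) (ih (r - 1) (by omega) B2 R2 hWC2)
                (a := Finsupp.single (C 0) 1 + blues (r - 3) (fun m => C (3 + m)))
                (b := Finsupp.single (S 1) 1) ?_ ?_ ?_
              · rw [hCdec, hB1dec]; abel
              · rw [hR1dec, hB2dec]; abel
              · rw [hSdec, hR2dec]; abel
            · -- Case A : j0 ≤ j2, chord ((C 2).1.1, (C 0).1.2)
              have hvA : ((C 2).1.1, (C 0).1.2) ∈ verts P := by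
                refine verts_col_convex hw hcc (hS1 ▸ (S 1).2) (hVC 2)
                  (le_of_lt (hmin' 0 (by omega) (by omega))) hcase
              set cA : Vx P := ⟨((C 2).1.1, (C 0).1.2), hvA⟩ with hcA
              set B1 : ℕ → Vx P := fun u => if u = 0 then C 1 else cA with hB1d
              set R1 : ℕ → Vx P := fun u => if u = 0 then S 1 else S 0 with hR1d
              set B2 : ℕ → Vx P := fun u => if u = 0 then C 0 else C (u + 1) with hB2d
              set R2 : ℕ → Vx P := fun u => if u = 0 then cA else S (u + 1) with hR2d
              have hWC1 : IsWalk P 2 B1 R1 := by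
                intro u hu
                interval_cases u
                · constructor
                  · show (S 1).1.2 = (C 1).1.2
                    exact (hW' 1 (by omega)).1
                  · show (S 1).1.1 = (C 2).1.1
                    rw [hS1]
                · constructor
                  · show (S 0).1.2 = (C 0).1.2
                    exact (hW' 0 (by omega)).1
                  · show (S 0).1.1 = (C 1).1.1
                    rw [hS0]
              have hWC2 : IsWalk P (r - 1) B2 R2 := by
                intro u hu
                rcases (show u = 0 ∨ 1 ≤ u by omega) with rfl | hu1
                · constructor
                  · show cA.1.2 = (C 0).1.2
                    rfl
                  · show cA.1.1 = (B2 ((0 + 1) % (r - 1))).1.1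
                    rw [show (0 + 1) % (r - 1) = 1 from Nat.mod_eq_of_lt (by omega)]
                    rfl
                · have hne0 : u ≠ 0 := by omega
                  obtain ⟨h1, h2⟩ := hW' (u + 1) (by omega)
                  constructor
                  · simp only [hR2d, hB2d]
                    rw [if_neg hne0, if_neg hne0]
                    exact h1
                  · simp only [hR2d, hB2d]
                    rw [if_neg hne0]
                    rcases Nat.lt_or_ge (u + 1) (r - 1) with hult | hueq
                    · rw [show (u + 1) % (r - 1) = u + 1 from Nat.mod_eq_of_lt hult,
                        if_neg (show u + 1 ≠ 0 by omega)]
                      rw [h2, Nat.mod_eq_of_lt (by omega)]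
                    · rw [show (u + 1) % (r - 1) = 0 from by
                          rw [show u + 1 = r - 1 by omega]; exact Nat.mod_self _, if_pos rfl]
                      rw [h2, show (u + 1 + 1) % r = 0 from by
                          rw [show u + 1 + 1 = r by omega]; exact Nat.mod_self _]
              have hB1dec : blues 2 B1 = Finsupp.single (C 1) 1 + Finsupp.single cA 1 := by
                rw [blues_two]; simp [hB1d]
              have hR1dec : blues 2 R1 = Finsupp.single (S 1) 1 + Finsupp.single (S 0) 1 := by
                rw [blues_two]; simp [hR1d]
              have hB2dec : blues (r - 1) B2
                  = Finsupp.single (C 0) 1 + blues (r - 2) (fun m => C (2 + m)) := by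
                have hhead : blues 1 B2 = Finsupp.single (C 0) 1 := by
                  simp [blues, hB2d]
                have htail : blues (r - 2) (fun m => B2 (1 + m))
                    = blues (r - 2) (fun m => C (2 + m)) := by
                  simp only [blues]
                  refine Finset.sum_congr rfl fun m hm => ?_
                  simp only [hB2d]
                  rw [if_neg (show 1 + m ≠ 0 by omega), show 1 + m + 1 = 2 + m by omega]
                rw [blues_split (r - 1) 1 (by omega) B2,
                  show r - 1 - 1 = r - 2 by omega, hhead, htail]
              have hR2dec : blues (r - 1) R2
                  = Finsupp.single cA 1 + blues (r - 2) (fun m => S (2 + m)) := by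
                have hhead : blues 1 R2 = Finsupp.single cA 1 := by
                  simp [blues, hR2d]
                have htail : blues (r - 2) (fun m => R2 (1 + m))
                    = blues (r - 2) (fun m => S (2 + m)) := by
                  simp only [blues]
                  refine Finset.sum_congr rfl fun m hm => ?_
                  simp only [hR2d]
                  rw [if_neg (show 1 + m ≠ 0 by omega), show 1 + m + 1 = 2 + m by omega]
                rw [blues_split (r - 1) 1 (by omega) R2,
                  show r - 1 - 1 = r - 2 by omega, hhead, htail]
              have hCdec : blues r C = Finsupp.single (C 0) 1 + Finsupp.single (C 1) 1
                  + blues (r - 2) (fun m => C (2 + m)) := by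
                rw [blues_split r 2 (by omega) C, blues_two]
              have hSdec : blues r S = Finsupp.single (S 0) 1 + Finsupp.single (S 1) 1
                  + blues (r - 2) (fun m => S (2 + m)) := by
                rw [blues_split r 2 (by omega) S, blues_two]
              refine chain_mem (ih (r - 1) (by omega) B2 R2 hWC2) (ih 2 (by omega) B1 R1 hWC1)
                (a := Finsupp.single (C 1) 1)
                (b := blues (r - 2) (fun m => S (2 + m))) ?_ ?_ ?_
              · rw [hCdec, hB2dec]; abel
              · rw [hR2dec, hB1dec]; abel
              · rw [hSdec, hR1dec]; abel

end PolyoAux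

namespace PolyoAux

open MvPolynomial Finset

lemma blues_apply {P : Finset Cell} (r : ℕ) (B : ℕ → Vx P) (v : Vx P) :
    (blues r B) v = ∑ m ∈ range r, if B m = v then 1 else 0 := by
  rw [blues, Finset.sum_apply']
  exact Finset.sum_congr rfl fun m hm => Finsupp.single_apply

lemma blues_le {P : Finset Cell} {r : ℕ} {B : ℕ → Vx P} {u : Vx P →₀ ℕ}
    (hinj : ∀ m1 m2, m1 < r → m2 < r → B m1 = B m2 → m1 = m2)
    (hmem : ∀ m, m < r → B m ∈ u.support) : blues r B ≤ u := by
  rw [Finsupp.le_def]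
  intro v
  rw [blues_apply]
  by_cases hv : ∃ m, m < r ∧ B m = v
  · obtain ⟨m0, hm0, hbv⟩ := hv
    have h1 : ∑ m ∈ range r, (if B m = v then 1 else 0) ≤ 1 := by
      rw [Finset.sum_boole]
      rw [Nat.cast_le_one]
      apply Finset.card_le_one.mpr
      intro a ha b hb
      simp only [Finset.mem_filter, Finset.mem_range] at ha hb
      exact hinj a b ha.1 hb.1 (ha.2.trans hb.2.symm)
    have h2 : 1 ≤ u v := by
      have := hmem m0 hm0
      rw [hbv] at this
      exact Nat.pos_of_ne_zero (Finsupp.mem_support_iff.mp this)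
    omega
  · push_neg at hv
    rw [Finset.sum_eq_zero]
    · omega
    · intro m hm
      rw [if_neg (hv m (Finset.mem_range.mp hm))]

lemma blues_pos {P : Finset Cell} {r : ℕ} (hr : 0 < r) (B : ℕ → Vx P) :
    0 < (blues r B).sum fun _ n => n := by
  have h1 : 0 < (blues r B) (B 0) := by
    rw [blues_apply]
    have : (if B 0 = B 0 then 1 else 0) ≤ ∑ m ∈ range r, if B m = B 0 then 1 else 0 :=
      Finset.single_le_sum (f := fun m => if B m = B 0 then 1 else 0)
        (fun x _ => by positivity) (Finset.mem_range.mpr hr)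
    simpa using this
  have h2 : B 0 ∈ (blues r B).support := Finsupp.mem_support_iff.mpr (by omega)
  have h3 : (blues r B) (B 0) ≤ (blues r B).sum fun _ n => n :=
    Finset.single_le_sum (f := fun v => (blues r B) v) (fun x _ => Nat.zero_le _) h2
  omega

lemma extract_walk {P : Finset Cell} {u w : Vx P →₀ ℕ} (hg : gam u = gam w)
    (hu : u ≠ 0) (hdisj : ∀ v : Vx P, v ∈ u.support → v ∉ w.support) :
    ∃ r, 0 < r ∧ ∃ B R : ℕ → Vx P, IsWalk P r B R ∧ blues r B ≤ u ∧ blues r R ≤ w := by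
  classical
  obtain ⟨v0, hv0⟩ := Finsupp.support_nonempty_iff.mpr hu
  have hcolex : ∀ v : Vx P, ∃ v' : Vx P, v ∈ u.support → (v' ∈ w.support ∧ v'.1.2 = v.1.2) := by
    intro v
    by_cases hv : v ∈ u.support
    · obtain ⟨v', h1, h2⟩ := exists_same_col hg hv
      exact ⟨v', fun _ => ⟨h1, h2⟩⟩
    · exact ⟨v0, fun h => absurd h hv⟩
  choose fc hfc using hcolex
  have hrowex : ∀ v' : Vx P, ∃ v : Vx P, v' ∈ w.support → (v ∈ u.support ∧ v.1.1 = v'.1.1) := by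
    intro v'
    by_cases hv : v' ∈ w.support
    · obtain ⟨v, h1, h2⟩ := exists_same_row hg.symm hv
      exact ⟨v, fun _ => ⟨h1, h2⟩⟩
    · exact ⟨v0, fun h => absurd h hv⟩
  choose fr hfr using hrowex
  set b : ℕ → Vx P := fun n => Nat.rec v0 (fun _ prev => fr (fc prev)) n with hbdef
  have hb : ∀ n, b n ∈ u.support := by
    intro n
    induction n with
    | zero => exact hv0
    | succ n ihn => exact (hfr (fc (b n)) (hfc (b n) ihn).1).1
  have hbw : ∀ n, fc (b n) ∈ w.support := fun n => (hfc (b n) (hb n)).1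
  have hbcol : ∀ n, (fc (b n)).1.2 = (b n).1.2 := fun n => (hfc (b n) (hb n)).2
  have hbrow : ∀ n, (b (n + 1)).1.1 = (fc (b n)).1.1 := fun n => (hfr (fc (b n)) (hbw n)).2
  have hex : ∃ t, ∃ s, s < t ∧ (b s = b t ∨ fc (b s) = fc (b t)) := by
    obtain ⟨s, hs, t, ht, hst, heq⟩ := Finset.exists_ne_map_eq_of_card_lt_of_maps_to
      (s := range (u.support.card + 1)) (t := u.support) (by simp) (fun n _ => hb n)
    rcases Nat.lt_or_ge s t with h | h
    · exact ⟨t, s, h, Or.inl heq⟩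
    · exact ⟨s, t, by omega, Or.inl heq.symm⟩
  set T := Nat.find hex with hT
  obtain ⟨s0, hs0T, hrep⟩ := Nat.find_spec hex
  have hmin : ∀ t' : ℕ, t' < T → ∀ s < t', b s ≠ b t' ∧ fc (b s) ≠ fc (b t') := by
    intro t' ht' s hst
    have hnot := Nat.find_min hex ht'
    push_neg at hnot
    exact hnot s hst
  by_cases hblue : ∃ s, s < T ∧ b s = b T
  · obtain ⟨s1, hs1, hb1⟩ := hblue
    refine ⟨T - s1, by omega, fun m => b (s1 + m), fun m => fc (b (s1 + m)), ?_, ?_, ?_⟩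
    · intro m hm
      refine ⟨hbcol _, ?_⟩
      beta_reduce
      rcases Nat.lt_or_ge (m + 1) (T - s1) with hlt | hge
      · rw [Nat.mod_eq_of_lt hlt, ← hbrow (s1 + m), show s1 + m + 1 = s1 + (m + 1) by omega]
      · have hmeq : m + 1 = T - s1 := by omega
        rw [hmeq, Nat.mod_self, ← hbrow (s1 + m),
          show s1 + m + 1 = T by omega, show s1 + 0 = s1 by omega, hb1]
    · refine blues_le ?_ (fun m _ => hb _)
      intro m1 m2 hm1 hm2 heq
      by_contra hne
      rcases Nat.lt_or_ge m1 m2 with h | h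
      · exact (hmin (s1 + m2) (by omega) (s1 + m1) (by omega)).1 heq
      · exact (hmin (s1 + m1) (by omega) (s1 + m2) (by omega)).1 heq.symm
    · refine blues_le ?_ (fun m _ => hbw _)
      intro m1 m2 hm1 hm2 heq
      by_contra hne
      rcases Nat.lt_or_ge m1 m2 with h | h
      · exact (hmin (s1 + m2) (by omega) (s1 + m1) (by omega)).2 heq
      · exact (hmin (s1 + m1) (by omega) (s1 + m2) (by omega)).2 heq.symm
  · have hred : fc (b s0) = fc (b T) := by
      rcases hrep with h | h
      · exact absurd ⟨s0, hs0T, h⟩ hblue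
      · exact h
    refine ⟨T - s0, by omega, fun m => b (s0 + 1 + m), fun m => fc (b (s0 + 1 + m)), ?_, ?_, ?_⟩
    · intro m hm
      refine ⟨hbcol _, ?_⟩
      beta_reduce
      rcases Nat.lt_or_ge (m + 1) (T - s0) with hlt | hge
      · rw [Nat.mod_eq_of_lt hlt, ← hbrow (s0 + 1 + m), show s0 + 1 + m + 1 = s0 + 1 + (m + 1) by omega]
      · have hmeq : m + 1 = T - s0 := by omega
        rw [hmeq, Nat.mod_self, show s0 + 1 + m = T by omega, ← hred, ← hbrow s0,
          show s0 + 1 + 0 = s0 + 1 by omega]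
    · refine blues_le ?_ (fun m _ => hb _)
      intro m1 m2 hm1 hm2 heq
      by_contra hne
      rcases Nat.lt_or_ge m1 m2 with h | h
      · rcases Nat.lt_or_ge (s0 + 1 + m2) T with hc | hc
        · exact (hmin (s0 + 1 + m2) hc (s0 + 1 + m1) (by omega)).1 heq
        · have hT2 : s0 + 1 + m2 = T := by omega
          rw [hT2] at heq
          exact hblue ⟨s0 + 1 + m1, by omega, heq⟩
      · rcases Nat.lt_or_ge (s0 + 1 + m1) T with hc | hc
        · exact (hmin (s0 + 1 + m1) hc (s0 + 1 + m2) (by omega)).1 heq.symm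
        · have hT2 : s0 + 1 + m1 = T := by omega
          rw [hT2] at heq
          exact hblue ⟨s0 + 1 + m2, by omega, heq.symm⟩
    · refine blues_le ?_ (fun m _ => hbw _)
      intro m1 m2 hm1 hm2 heq
      by_contra hne
      rcases Nat.lt_or_ge m1 m2 with h | h
      · rcases Nat.lt_or_ge (s0 + 1 + m2) T with hc | hc
        · exact (hmin (s0 + 1 + m2) hc (s0 + 1 + m1) (by omega)).2 heq
        · have hT2 : s0 + 1 + m2 = T := by omega
          rw [hT2, ← hred] at heq
          exact (hmin (s0 + 1 + m1) (by omega) s0 (by omega)).2 heq.symm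
      · rcases Nat.lt_or_ge (s0 + 1 + m1) T with hc | hc
        · exact (hmin (s0 + 1 + m1) hc (s0 + 1 + m2) (by omega)).2 heq.symm
        · have hT2 : s0 + 1 + m1 = T := by omega
          rw [hT2, ← hred] at heq
          exact (hmin (s0 + 1 + m2) (by omega) s0 (by omega)).2 heq

end PolyoAux

namespace PolyoAux

open MvPolynomial Finset

variable {K : Type*} [Field K]

lemma sum_eq_zero_of_deg {P : Finset Cell} {u : Vx P →₀ ℕ}
    (h : (u.sum fun _ n => n) = 0) : u = 0 := by
  by_contra hne
  obtain ⟨v, hv⟩ := Finsupp.support_nonempty_iff.mpr hne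
  have h1 : u v ≤ u.sum fun _ n => n :=
    Finset.single_le_sum (f := fun v => u v) (fun x _ => Nat.zero_le _) hv
  have h2 := Finsupp.mem_support_iff.mp hv
  omega

lemma main_binomial {P : Finset Cell} (hw : WeaklyConnected P) (hrc : RowConvex P)
    (hcc : ColConvex P) :
    ∀ N : ℕ, ∀ u w : Vx P →₀ ℕ, (u.sum fun _ n => n) ≤ N → gam u = gam w →
      (monomial u 1 - monomial w 1 : MvPolynomial (Vx P) K) ∈ innerIdeal K P := by
  intro N
  induction N with
  | zero =>
    intro u w hdeg hg
    have hu : u = 0 := sum_eq_zero_of_deg (by omega)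
    have hw0 : w = 0 := gam_eq_zero (by rw [← hg, hu, map_zero])
    rw [hu, hw0, sub_self]
    exact zero_mem _
  | succ N ihN =>
    intro u w hdeg hg
    by_cases huw : u = w
    · rw [huw, sub_self]; exact zero_mem _
    by_cases hcomm : ∃ v : Vx P, v ∈ u.support ∧ v ∈ w.support
    · obtain ⟨v, hvu, hvw⟩ := hcomm
      have hvu1 : 1 ≤ u v := Nat.pos_of_ne_zero (Finsupp.mem_support_iff.mp hvu)
      have hvw1 : 1 ≤ w v := Nat.pos_of_ne_zero (Finsupp.mem_support_iff.mp hvw)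
      set u' := u - Finsupp.single v 1 with hu'
      set w' := w - Finsupp.single v 1 with hw'
      have hus : Finsupp.single v 1 + u' = u := by
        ext a
        simp only [hu', Finsupp.add_apply, Finsupp.tsub_apply, Finsupp.single_apply]
        by_cases hav : v = a
        · subst hav; rw [if_pos rfl]; omega
        · rw [if_neg hav]; omega
      have hws : Finsupp.single v 1 + w' = w := by
        ext a
        simp only [hw', Finsupp.add_apply, Finsupp.tsub_apply, Finsupp.single_apply]
        by_cases hav : v = a
        · subst hav; rw [if_pos rfl]; omega
        · rw [if_neg hav]; omega
      have hgam' : gam u' = gam w' := by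
        have h1 : gam (Finsupp.single v 1) + gam u' = gam (Finsupp.single v 1) + gam w' := by
          rw [← map_add, ← map_add, hus, hws, hg]
        exact add_left_cancel h1
      have hdeg' : (u'.sum fun _ n => n) ≤ N := by
        have h1 : (u.sum fun _ n => n)
            = ((Finsupp.single v 1).sum fun _ n => n) + (u'.sum fun _ n => n) := by
          rw [← hus, Finsupp.sum_add_index' (fun _ => rfl) (fun _ _ _ => rfl)]
        have h2 : ((Finsupp.single v 1).sum fun _ n => n) = 1 :=
          Finsupp.sum_single_index rfl
        omega
      have heq : (monomial u 1 - monomial w 1 : MvPolynomial (Vx P) K)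
          = monomial (Finsupp.single v 1) 1 * (monomial u' 1 - monomial w' 1) := by
        rw [monomial_sub_mul, hus, hws]
      rw [heq]
      exact Ideal.mul_mem_left _ _ (ihN u' w' hdeg' hgam')
    · push_neg at hcomm
      have hu0 : u ≠ 0 := by
        intro h
        apply huw
        have : w = 0 := gam_eq_zero (by rw [← hg, h, map_zero])
        rw [h, this]
      obtain ⟨r, hr0, B, R, hWalk, hbu, hbw⟩ := extract_walk hg hu0 hcomm
      set u' := u - blues r B with hu'
      set w' := w - blues r R with hw'
      have hus : blues r B + u' = u := by
        rw [hu', add_comm]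
        exact tsub_add_cancel_of_le hbu
      have hws : blues r R + w' = w := by
        rw [hw', add_comm]
        exact tsub_add_cancel_of_le hbw
      have hgam' : gam u' = gam w' := by
        have h1 : gam (blues r B) + gam u' = gam (blues r B) + gam w' := by
          rw [← map_add, hus, hg, ← hws, map_add, gam_walk hWalk]
        exact add_left_cancel h1
      have hdeg' : (u'.sum fun _ n => n) ≤ N := by
        have h1 : (u.sum fun _ n => n)
            = ((blues r B).sum fun _ n => n) + (u'.sum fun _ n => n) := by
          rw [← hus, Finsupp.sum_add_index' (fun _ => rfl) (fun _ _ _ => rfl)]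
        have h2 := blues_pos hr0 B
        omega
      exact chain_mem (walk_mem hw hrc hcc r B R hWalk) (ihN u' w' hdeg' hgam')
        (a := u') (b := blues r R) (by rw [add_comm, hus]) (add_comm _ _)
        (by rw [hws])

lemma ker_le {P : Finset Cell} (hw : WeaklyConnected P) (hrc : RowConvex P)
    (hcc : ColConvex P) :
    RingHom.ker (phiP K P).toRingHom ≤ innerIdeal K P := by
  suffices H : ∀ n : ℕ, ∀ f : MvPolynomial (Vx P) K,
      f ∈ RingHom.ker (phiP K P).toRingHom → f.support.card ≤ n → f ∈ innerIdeal K P by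
    intro f hf
    exact H f.support.card f hf le_rfl
  intro n
  induction n with
  | zero =>
    intro f hf hcard
    have : f.support = ∅ := Finset.card_eq_zero.mp (by omega)
    rw [MvPolynomial.support_eq_empty.mp this]
    exact zero_mem _
  | succ n ihn =>
    intro f hf hcard
    by_cases hf0 : f = 0
    · rw [hf0]; exact zero_mem _
    have hphi0 : (phiP K P) f = 0 := hf
    obtain ⟨u, hu⟩ := Finset.nonempty_of_ne_empty
      (fun h => hf0 (MvPolynomial.support_eq_empty.mp h))
    have hphi : (phiP K P) f = ∑ m ∈ f.support, monomial (gam m) (MvPolynomial.coeff m f) := by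
      conv_lhs => rw [f.as_sum]
      rw [map_sum]
      exact Finset.sum_congr rfl fun m _ => phi_monomial m _
    have hcoeff : ∑ m ∈ f.support,
        (if gam m = gam u then MvPolynomial.coeff m f else 0) = 0 := by
      have h0 : MvPolynomial.coeff (gam u) ((phiP K P) f) = 0 := by
        rw [hphi0]; simp
      rw [hphi, MvPolynomial.coeff_sum] at h0
      simpa [MvPolynomial.coeff_monomial] using h0
    have hne : ∃ m ∈ f.support, gam m = gam u ∧ m ≠ u := by
      by_contra hcon
      push_neg at hcon
      have hsum : ∑ m ∈ f.support,
          (if gam m = gam u then MvPolynomial.coeff m f else 0) = MvPolynomial.coeff u f := by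
        rw [Finset.sum_eq_single u]
        · rw [if_pos rfl]
        · intro m hm hmu
          rcases em (gam m = gam u) with h | h
          · exact absurd (hcon m hm h) hmu
          · rw [if_neg h]
        · intro hu'; exact absurd hu hu'
      rw [hsum] at hcoeff
      exact (MvPolynomial.mem_support_iff.mp hu) hcoeff
    obtain ⟨m, hm, hgm, hmu⟩ := hne
    set c := MvPolynomial.coeff u f with hc
    set bpoly := (monomial u (1 : K) - monomial m 1) with hbp
    have hbI : bpoly ∈ innerIdeal K P := main_binomial hw hrc hcc _ u m le_rfl hgm.symm
    have hbker : (phiP K P) bpoly = 0 := by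
      rw [hbp, map_sub, phi_monomial, phi_monomial, hgm]
      exact sub_self _
    set f' := f - MvPolynomial.C c * bpoly with hf'
    have hker' : f' ∈ RingHom.ker (phiP K P).toRingHom := by
      have : (phiP K P) f' = 0 := by
        rw [hf', map_sub, map_mul, hbker, mul_zero, sub_zero, hphi0]
      exact this
    have hcneq : ∀ a : Vx P →₀ ℕ, MvPolynomial.coeff a f'
        = MvPolynomial.coeff a f - c * ((if u = a then (1:K) else 0) - if m = a then 1 else 0) := by
      intro a
      rw [hf', MvPolynomial.coeff_sub, MvPolynomial.coeff_C_mul, hbp,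
        MvPolynomial.coeff_sub, MvPolynomial.coeff_monomial, MvPolynomial.coeff_monomial]
    have hsupp : f'.support ⊆ f.support.erase u := by
      intro a ha
      rw [Finset.mem_erase]
      have hca := MvPolynomial.mem_support_iff.mp ha
      constructor
      · intro hau
        subst hau
        rw [hcneq a, if_pos rfl, if_neg hmu] at hca
        simp [hc] at hca
      · by_contra hanot
        have h1 : MvPolynomial.coeff a f = 0 := MvPolynomial.notMem_support_iff.mp hanot
        have h2 : u ≠ a := fun h => hanot (h ▸ hu)
        have h3 : m ≠ a := fun h => hanot (h ▸ hm)
        rw [hcneq a, h1, if_neg h2, if_neg h3] at hca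
        simp at hca
    have hcard' : f'.support.card ≤ n := by
      have h1 := Finset.card_le_card hsupp
      have h2 := Finset.card_erase_of_mem hu
      omega
    have hfeq : f = f' + MvPolynomial.C c * bpoly := by rw [hf']; ring
    rw [hfeq]
    exact add_mem (ihn f' hker' hcard') (Ideal.mul_mem_left _ _ hbI)

end PolyoAux


/-- If `P` is weakly connected and convex, then `I_P` equals the
toric ideal `J_P = ker φ`. -/
theorem innerIdeal_eq_toric_of_convex (K : Type*) [Field K] (P : Finset Cell)
    (hw : WeaklyConnected P) (hc : IsConvexColl P) :
    innerIdeal K P = RingHom.ker (phiP K P).toRingHom :=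
  le_antisymm PolyoAux.inner_le_ker (PolyoAux.ker_le hw hc.1 hc.2)
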